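/- Under the pseudo-bosonic setup with [a,b]f = f on D, a φ₀ = 0, b† Ψ₀ = 0, and defining φₙ = (1/√n!) bⁿ φ₀ and Ψₙ = (1/√n!) (a†)ⁿ Ψ₀, the vectors φₙ and Ψₙ are eigenvectors of N = ba and N† = a†b† respectively: N φₙ = n φₙ and N† Ψₙ = n Ψₙ for all n ≥ 0. -/

import Mathlib

open scoped ComplexConjugate

local notation "⟪" x ", " y "⟫" => @inner ℂ _ _ x y

theorem stmt1 {H : Type*} [NormedAddCommGroup H] [InnerProductSpace ℂ H] [CompleteSpace H]
    (D : Submodule ℂ H) (hD : Dense (D : Set H))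
    (a b a' b' : H →ₗ[ℂ] H)
    (ha : ∀ f ∈ D, a f ∈ D) (hb : ∀ f ∈ D, b f ∈ D)
    (ha' : ∀ f ∈ D, a' f ∈ D) (hb' : ∀ f ∈ D, b' f ∈ D)
    (hadj_a : ∀ f ∈ D, ∀ g ∈ D, ⟪a' f, g⟫ = ⟪f, a g⟫)
    (hadj_b : ∀ f ∈ D, ∀ g ∈ D, ⟪b' f, g⟫ = ⟪f, b g⟫)
    (hcomm : ∀ f ∈ D, a (b f) - b (a f) = f)
    (φ₀ Ψ₀ : H) (hφ₀D : φ₀ ∈ D) (hΨ₀D : Ψ₀ ∈ D) (hφ₀ : φ₀ ≠ 0) (hΨ₀ : Ψ₀ ≠ 0)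
    (haφ₀ : a φ₀ = 0) (hb'Ψ₀ : b' Ψ₀ = 0)
    (φ Ψ : ℕ → H)
    (hφ : ∀ n, φ n = ((Real.sqrt n.factorial : ℝ) : ℂ)⁻¹ • (b ^ n) φ₀)
    (hΨ : ∀ n, Ψ n = ((Real.sqrt n.factorial : ℝ) : ℂ)⁻¹ • (a' ^ n) Ψ₀) :
    (∀ n : ℕ, b (a (φ n)) = (n : ℂ) • φ n) ∧
    (∀ n : ℕ, a' (b' (Ψ n)) = (n : ℂ) • Ψ n) := by
  -- dual commutation relation
  have hcomm' : ∀ f ∈ D, b' (a' f) - a' (b' f) = f := by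
    intro f hf
    apply hD.eq_of_inner_left ℂ
    intro g hg
    simp only [inner_sub_left]
    rw [hadj_a (b' f) (hb' f hf) g hg, hadj_b (a' f) (ha' f hf) g hg,
      hadj_b f hf (a g) (ha g hg), hadj_a f hf (b g) (hb g hg),
      ← inner_sub_right, hcomm g hg]
  -- membership
  have hbn : ∀ n, (b ^ n) φ₀ ∈ D := by
    intro n; induction n with
    | zero => simpa using hφ₀D
    | succ n ih => rw [pow_succ', Module.End.mul_apply]; exact hb _ ih
  have ha'n : ∀ n, (a' ^ n) Ψ₀ ∈ D := by
    intro n; induction n with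
    | zero => simpa using hΨ₀D
    | succ n ih => rw [pow_succ', Module.End.mul_apply]; exact ha' _ ih
  -- key ladder identities
  have key1 : ∀ n : ℕ, a ((b ^ n) φ₀) = (n : ℂ) • (b ^ (n - 1)) φ₀ := by
    intro n; induction n with
    | zero => simpa using haφ₀
    | succ n ih =>
      rw [pow_succ', Module.End.mul_apply]
      have h := hcomm ((b ^ n) φ₀) (hbn n)
      rw [sub_eq_iff_eq_add.mp h, ih, map_smul]
      cases n with
      | zero => simp
      | succ m =>
        have : b ((b ^ (m + 1 - 1)) φ₀) = (b ^ (m + 1)) φ₀ := by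
          rw [Nat.add_sub_cancel, pow_succ', Module.End.mul_apply]
        rw [this]
        simp only [Nat.add_sub_cancel]
        push_cast
        module
  have key2 : ∀ n : ℕ, b' ((a' ^ n) Ψ₀) = (n : ℂ) • (a' ^ (n - 1)) Ψ₀ := by
    intro n; induction n with
    | zero => simpa using hb'Ψ₀
    | succ n ih =>
      rw [pow_succ', Module.End.mul_apply]
      have h := hcomm' ((a' ^ n) Ψ₀) (ha'n n)
      rw [sub_eq_iff_eq_add.mp h, ih, map_smul]
      cases n with
      | zero => simp
      | succ m =>
        have : a' ((a' ^ (m + 1 - 1)) Ψ₀) = (a' ^ (m + 1)) Ψ₀ := by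
          rw [Nat.add_sub_cancel, pow_succ', Module.End.mul_apply]
        rw [this]
        simp only [Nat.add_sub_cancel]
        push_cast
        module
  constructor
  · intro n
    rw [hφ n, map_smul, map_smul, key1 n, map_smul]
    cases n with
    | zero => simp
    | succ m =>
      rw [Nat.add_sub_cancel, ← Module.End.mul_apply, ← pow_succ']
      exact smul_comm _ _ _
  · intro n
    rw [hΨ n, map_smul, map_smul, key2 n, map_smul]
    cases n with
    | zero => simp
    | succ m =>
      rw [Nat.add_sub_cancel, ← Module.End.mul_apply, ← pow_succ']
      exact smul_comm _ _ _
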